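/- Let 𝒫 be a finite set of pairwise disjoint upward paths and suppose P₀ ≺ P₁ ≺ … ≺ P_k is a chain in 𝒫 with k ≥ 1 chosen of minimum length among cycles, i.e., additionally P_k ≺ P₀. Then no such chain exists; equivalently, the relation ≺ on 𝒫 has no directed cycles. -/

import Mathlib

open Set

/-- An upward path: a continuous injective curve on `[0,1]` in `ℝ²` whose
y-coordinate is strictly monotone increasing. -/
structure UpwardPath where
  toFun : ℝ → ℝ × ℝ
  continuousOn : ContinuousOn toFun (Set.Icc 0 1)
  injOn : Set.InjOn toFun (Set.Icc 0 1)
  strictMonoY : StrictMonoOn (fun t => (toFun t).2) (Set.Icc 0 1)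

namespace UpwardPath

/-- The image (trace) of an upward path in the plane. -/
def image (P : UpwardPath) : Set (ℝ × ℝ) := P.toFun '' Set.Icc 0 1

/-- The set of points strictly to the right of `P`, at heights in the y-range of `P`. -/
def Right (P : UpwardPath) : Set (ℝ × ℝ) :=
  {p | (P.toFun 0).2 ≤ p.2 ∧ p.2 ≤ (P.toFun 1).2 ∧
    ∀ u' : ℝ, (u', p.2) ∈ P.image → u' < p.1}

/-- The set of points strictly to the left of `P`, at heights in the y-range of `P`. -/
def Left (P : UpwardPath) : Set (ℝ × ℝ) :=
  {p | (P.toFun 0).2 ≤ p.2 ∧ p.2 ≤ (P.toFun 1).2 ∧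
    ∀ u' : ℝ, (u', p.2) ∈ P.image → p.1 < u'}

/-- `P.Prec Q` (written `P ≺ Q`): some point of `Q` lies strictly to the right
(same y-coordinate, larger x-coordinate) of some point of `P`. -/
def Prec (P Q : UpwardPath) : Prop :=
  ∃ p ∈ P.image, ∃ q ∈ Q.image, p.2 = q.2 ∧ p.1 < q.1

/-- The y-range of an upward path. -/
def yRange (P : UpwardPath) : Set ℝ := Set.Icc (P.toFun 0).2 (P.toFun 1).2

end UpwardPath

namespace UpwardPath

lemma snd_mem_yRange (P : UpwardPath) {p : ℝ × ℝ} (hp : p ∈ P.image) :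
    p.2 ∈ Icc (P.toFun 0).2 (P.toFun 1).2 := by
  obtain ⟨t, ht, rfl⟩ := hp
  exact ⟨P.strictMonoY.monotoneOn (left_mem_Icc.mpr zero_le_one) ht ht.1,
    P.strictMonoY.monotoneOn ht (right_mem_Icc.mpr zero_le_one) ht.2⟩

lemma contY (P : UpwardPath) : ContinuousOn (fun t => (P.toFun t).2) (Icc 0 1) :=
  P.continuousOn.snd

lemma exists_at_height (P : UpwardPath) {y : ℝ}
    (hy : y ∈ Icc (P.toFun 0).2 (P.toFun 1).2) :
    ∃ p ∈ P.image, p.2 = y := by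
  obtain ⟨t, ht, h⟩ := intermediate_value_Icc (zero_le_one) P.contY hy
  exact ⟨P.toFun t, ⟨t, ht, rfl⟩, h⟩

lemma not_prec_self (P : UpwardPath) : ¬ P.Prec P := by
  rintro ⟨p, ⟨s, hs, rfl⟩, q, ⟨t, ht, rfl⟩, hy, hx⟩
  have : s = t := P.strictMonoY.injOn hs ht hy
  subst this; exact lt_irrefl _ hx

noncomputable def yEquiv (P : UpwardPath) :
    Icc (0:ℝ) 1 ≃ Icc (P.toFun 0).2 (P.toFun 1).2 :=
  Equiv.ofBijective (fun t => ⟨(P.toFun t).2, P.snd_mem_yRange ⟨t, t.2, rfl⟩⟩)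
    ⟨fun t1 t2 h => Subtype.ext (P.strictMonoY.injOn t1.2 t2.2 (congrArg Subtype.val h)),
     fun z => by
      obtain ⟨p, ⟨t, ht, rfl⟩, hpz⟩ := P.exists_at_height z.2
      exact ⟨⟨t, ht⟩, Subtype.ext hpz⟩⟩

noncomputable def yHomeo (P : UpwardPath) :
    Icc (0:ℝ) 1 ≃ₜ Icc (P.toFun 0).2 (P.toFun 1).2 :=
  Continuous.homeoOfEquivCompactToT2 (f := P.yEquiv)
    (Continuous.subtype_mk (P.continuousOn.restrict.snd) _)

noncomputable def sig (P : UpwardPath) (y : ℝ) : ℝ :=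
  if h : y ∈ Icc (P.toFun 0).2 (P.toFun 1).2 then (P.yHomeo.symm ⟨y, h⟩ : ℝ) else 0

lemma sig_mem (P : UpwardPath) {y : ℝ} (hy : y ∈ Icc (P.toFun 0).2 (P.toFun 1).2) :
    P.sig y ∈ Icc (0:ℝ) 1 := by
  rw [sig, dif_pos hy]; exact (P.yHomeo.symm ⟨y, hy⟩).2

lemma toFun_sig_snd (P : UpwardPath) {y : ℝ} (hy : y ∈ Icc (P.toFun 0).2 (P.toFun 1).2) :
    (P.toFun (P.sig y)).2 = y := by
  rw [sig, dif_pos hy]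
  have := P.yHomeo.apply_symm_apply ⟨y, hy⟩
  exact congrArg Subtype.val this

lemma toFun_sig_mem (P : UpwardPath) {y : ℝ} (hy : y ∈ Icc (P.toFun 0).2 (P.toFun 1).2) :
    P.toFun (P.sig y) ∈ P.image := ⟨P.sig y, P.sig_mem hy, rfl⟩

lemma toFun_sig_of_mem (P : UpwardPath) {p : ℝ × ℝ} (hp : p ∈ P.image) :
    P.toFun (P.sig p.2) = p := by
  have hy := P.snd_mem_yRange hp
  obtain ⟨t, ht, rfl⟩ := hp
  have : P.sig (P.toFun t).2 = t :=
    P.strictMonoY.injOn (P.sig_mem hy) ht (P.toFun_sig_snd hy)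
  rw [this]

lemma sig_continuousOn (P : UpwardPath) :
    ContinuousOn P.sig (Icc (P.toFun 0).2 (P.toFun 1).2) := by
  rw [continuousOn_iff_continuous_restrict]
  have h : (Icc (P.toFun 0).2 (P.toFun 1).2).domRestrict P.sig
      = fun z => ((P.yHomeo.symm ⟨z.1, z.2⟩ : Icc (0:ℝ) 1) : ℝ) := by
    funext z; simp only [domRestrict, sig, dif_pos z.2]
  rw [h]
  exact continuous_subtype_val.comp (P.yHomeo.symm.continuous.comp
    (Continuous.subtype_mk continuous_subtype_val _))

noncomputable def xAt (P : UpwardPath) (y : ℝ) : ℝ := (P.toFun (P.sig y)).1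

lemma xAt_continuousOn (P : UpwardPath) :
    ContinuousOn P.xAt (Icc (P.toFun 0).2 (P.toFun 1).2) :=
  (P.continuousOn.comp P.sig_continuousOn (fun _ hy => P.sig_mem hy)).fst

lemma point_at (P : UpwardPath) {y : ℝ} (hy : y ∈ Icc (P.toFun 0).2 (P.toFun 1).2) :
    P.toFun (P.sig y) = (P.xAt y, y) :=
  Prod.ext rfl (P.toFun_sig_snd hy)

lemma xAt_eq (P : UpwardPath) {p : ℝ × ℝ} (hp : p ∈ P.image) : P.xAt p.2 = p.1 := by
  rw [xAt, P.toFun_sig_of_mem hp]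

lemma prec_strong {P Q : UpwardPath} (hd : Disjoint P.image Q.image)
    (h : P.Prec Q) : ∀ p ∈ P.image, ∀ q ∈ Q.image, p.2 = q.2 → p.1 < q.1 := by
  obtain ⟨p₀, hp₀, q₀, hq₀, hy₀, hx₀⟩ := h
  set a := max (P.toFun 0).2 (Q.toFun 0).2 with ha
  set b := min (P.toFun 1).2 (Q.toFun 1).2 with hb
  have hsubP : Icc a b ⊆ Icc (P.toFun 0).2 (P.toFun 1).2 :=
    Icc_subset_Icc (le_max_left _ _) (min_le_left _ _)
  have hsubQ : Icc a b ⊆ Icc (Q.toFun 0).2 (Q.toFun 1).2 :=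
    Icc_subset_Icc (le_max_right _ _) (min_le_right _ _)
  set g := fun y => P.xAt y - Q.xAt y with hgdef
  have hg : ContinuousOn g (Icc a b) :=
    (P.xAt_continuousOn.mono hsubP).sub (Q.xAt_continuousOn.mono hsubQ)
  have hne : ∀ y ∈ Icc a b, g y ≠ 0 := by
    intro y hy h0
    have hxy : P.xAt y = Q.xAt y := by
      have := sub_eq_zero.mp h0; exact this
    have h1 : P.toFun (P.sig y) = Q.toFun (Q.sig y) := by
      rw [P.point_at (hsubP hy), Q.point_at (hsubQ hy), hxy]
    exact disjoint_left.mp hd (h1 ▸ P.toFun_sig_mem (hsubP hy)) (Q.toFun_sig_mem (hsubQ hy))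
  have hmem : ∀ r ∈ P.image, ∀ s ∈ Q.image, r.2 = s.2 → r.2 ∈ Icc a b := by
    intro r hr s hs hrs
    exact ⟨max_le (P.snd_mem_yRange hr).1 (hrs ▸ (Q.snd_mem_yRange hs).1),
           le_min (P.snd_mem_yRange hr).2 (hrs ▸ (Q.snd_mem_yRange hs).2)⟩
  have hy₀m : p₀.2 ∈ Icc a b := hmem _ hp₀ _ hq₀ hy₀
  have hg₀ : g p₀.2 < 0 := by
    simp only [hgdef]
    rw [P.xAt_eq hp₀, hy₀, Q.xAt_eq hq₀]; linarith
  intro p hp q hq hy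
  have hym : p.2 ∈ Icc a b := hmem _ hp _ hq hy
  have hgp : g p.2 < 0 := by
    rcases lt_or_gt_of_ne (hne _ hym) with h'|h'
    · exact h'
    · exfalso
      have hsub2 : uIcc p₀.2 p.2 ⊆ Icc a b := by
        rw [uIcc]
        exact Icc_subset_Icc (le_inf hy₀m.1 hym.1) (sup_le hy₀m.2 hym.2)
      have h0 : (0:ℝ) ∈ uIcc (g p₀.2) (g p.2) := by
        rw [mem_uIcc]; left; exact ⟨hg₀.le, h'.le⟩
      obtain ⟨y₃, hy₃, hgy₃⟩ := intermediate_value_uIcc (hg.mono hsub2) h0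
      exact hne y₃ (hsub2 hy₃) hgy₃
  simp only [hgdef] at hgp
  rw [P.xAt_eq hp, hy, Q.xAt_eq hq] at hgp
  linarith

end UpwardPath

lemma no_cycle_aux (S : Set UpwardPath)
    (hdisj : S.Pairwise fun P Q => Disjoint P.image Q.image) :
    ∀ n, 1 ≤ n → ∀ f : Fin (n+1) → UpwardPath, (∀ i, f i ∈ S) →
      (∀ i : Fin n, (f i.castSucc).Prec (f i.succ)) →
      ¬ (f (Fin.last n)).Prec (f 0) := by
  intro n
  induction n using Nat.strong_induction_on with
  | _ n IH =>
  intro hn f hmem hchain hwrap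
  set F : ℕ → UpwardPath := fun k => f ⟨k % (n+1), Nat.mod_lt _ (Nat.succ_pos n)⟩ with hFdef
  have hF : ∀ k, (F k).Prec (F (k+1)) := by
    intro k
    have hrle : k % (n+1) ≤ n := Nat.lt_succ_iff.mp (Nat.mod_lt _ (Nat.succ_pos n))
    rcases lt_or_eq_of_le hrle with hr | hr
    · have h1 : (k+1) % (n+1) = k % (n+1) + 1 := by
        rw [Nat.add_mod]
        rw [Nat.mod_eq_of_lt (by omega : 1 < n+1)]
        exact Nat.mod_eq_of_lt (by omega)
      have := hchain ⟨k % (n+1), hr⟩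
      have e1 : (⟨k % (n+1), hr⟩ : Fin n).castSucc
          = (⟨k % (n+1), Nat.mod_lt _ (Nat.succ_pos n)⟩ : Fin (n+1)) := by
        ext; simp
      have e2 : (⟨k % (n+1), hr⟩ : Fin n).succ
          = (⟨(k+1) % (n+1), Nat.mod_lt _ (Nat.succ_pos n)⟩ : Fin (n+1)) := by
        ext; simp [h1]
      rw [e1, e2] at this
      exact this
    · have h1 : (k+1) % (n+1) = 0 := by
        rw [Nat.add_mod, hr, Nat.mod_eq_of_lt (show 1 < n+1 by omega), Nat.mod_self]
      have e1 : (⟨k % (n+1), Nat.mod_lt _ (Nat.succ_pos n)⟩ : Fin (n+1)) = Fin.last n := by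
        ext; exact hr
      have e2 : (⟨(k+1) % (n+1), Nat.mod_lt _ (Nat.succ_pos n)⟩ : Fin (n+1)) = 0 := by
        ext; simp [h1]
      show (f _).Prec (f _)
      rw [e1, e2]
      exact hwrap
  have hFmem : ∀ k, F k ∈ S := fun k => hmem _
  have hFper : ∀ k, F (k + (n+1)) = F k := by
    intro k; show f _ = f _; congr 1; ext; simp [Nat.add_mod_right]
  -- distinctness & disjointness of consecutive
  have hFne : ∀ k l, (F k).Prec (F l) → F k ≠ F l := by
    intro k l h heq; rw [heq] at h; exact (F l).not_prec_self h
  have hFdisj : ∀ k l, (F k).Prec (F l) → Disjoint (F k).image (F l).image :=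
    fun k l h => hdisj (hFmem k) (hFmem l) (hFne k l h)
  -- choose j maximizing the bottom height
  obtain ⟨j, -, hj⟩ := Finset.exists_max_image (Finset.univ : Finset (Fin (n+1)))
    (fun i => ((f i).toFun 0).2) ⟨0, Finset.mem_univ 0⟩
  set J := (j : ℕ) with hJ
  have hFJ : F J = f j := by
    show f _ = f _; congr 1; ext; simp [hJ, Nat.mod_eq_of_lt j.isLt]
  set y : ℝ := ((f j).toFun 0).2 with hy
  have hmax : ∀ k : ℕ, ((F k).toFun 0).2 ≤ y := fun k => hj _ (Finset.mem_univ _)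
  -- the three paths
  have E1 : (F (J+n)).Prec (F J) := by
    have := hF (J+n)
    have : (F (J+n)).Prec (F (J + (n+1))) := by
      rw [show J + (n+1) = J + n + 1 from by omega]; exact this
    rwa [hFper J] at this
  have E2 : (F J).Prec (F (J+1)) := hF J
  -- y is in the y-range of all three paths
  obtain ⟨p1, hp1, q1, hq1, hyy1, hx1⟩ := id E1
  obtain ⟨p2, hp2, q2, hq2, hyy2, hx2⟩ := id E2
  have hyA : y ∈ Icc ((F (J+n)).toFun 0).2 ((F (J+n)).toFun 1).2 := by
    constructor
    · exact hmax (J+n)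
    · have h1 : y ≤ q1.2 := by
        have := ((F J).snd_mem_yRange hq1).1; rw [hFJ] at this; exact this
      have h2 : p1.2 ≤ ((F (J+n)).toFun 1).2 := ((F (J+n)).snd_mem_yRange hp1).2
      linarith
  have hyB : y ∈ Icc ((F J).toFun 0).2 ((F J).toFun 1).2 := by
    rw [hFJ]
    refine ⟨le_refl _, le_of_lt ?_⟩
    exact (f j).strictMonoY (left_mem_Icc.mpr zero_le_one) (right_mem_Icc.mpr zero_le_one)
      zero_lt_one
  have hyC : y ∈ Icc ((F (J+1)).toFun 0).2 ((F (J+1)).toFun 1).2 := by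
    constructor
    · exact hmax (J+1)
    · have h1 : y ≤ p2.2 := by
        have := ((F J).snd_mem_yRange hp2).1; rw [hFJ] at this; exact this
      have h2 : q2.2 ≤ ((F (J+1)).toFun 1).2 := ((F (J+1)).snd_mem_yRange hq2).2
      linarith
  obtain ⟨pa, hpa, hpay⟩ := (F (J+n)).exists_at_height hyA
  set b : ℝ × ℝ := (F J).toFun 0 with hbdef
  have hb : b ∈ (F J).image := ⟨0, left_mem_Icc.mpr zero_le_one, rfl⟩
  have hby : b.2 = y := by rw [hbdef, hFJ]
  obtain ⟨pc, hpc, hpcy⟩ := (F (J+1)).exists_at_height hyC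
  have hab : pa.1 < b.1 :=
    UpwardPath.prec_strong (hFdisj _ _ E1) E1 pa hpa b hb (by rw [hpay, hby])
  have hbc : b.1 < pc.1 :=
    UpwardPath.prec_strong (hFdisj _ _ E2) E2 b hb pc hpc (by rw [hby, hpcy])
  have hAC : (F (J+n)).Prec (F (J+1)) :=
    ⟨pa, hpa, pc, hpc, by rw [hpay, hpcy], lt_trans hab hbc⟩
  by_cases hn1 : n = 1
  · subst hn1
    have E : (F 0).Prec (F 1) := hF 0
    have E' : (F 1).Prec (F 0) := by
      have h := hF 1
      have h20 : F 2 = F 0 := hFper 0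
      rwa [show (1:ℕ)+1 = 2 from rfl, h20] at h
    obtain ⟨p, hp, q, hq, hyy, hx⟩ := E'
    have := UpwardPath.prec_strong (hFdisj 0 1 E) E q hq p hp hyy.symm
    linarith
  · obtain ⟨m, rfl⟩ : ∃ m, n = m + 1 := ⟨n - 1, by omega⟩
    have chain' : ∀ i : Fin m, ((fun i : Fin (m+1) => F (J + 1 + (i:ℕ))) i.castSucc).Prec
        ((fun i : Fin (m+1) => F (J + 1 + (i:ℕ))) i.succ) := by
      intro i
      simp only [Fin.coe_castSucc, Fin.val_succ]
      have h := hF (J + 1 + (i : ℕ))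
      rw [show J + 1 + (i : ℕ) + 1 = J + 1 + ((i : ℕ) + 1) from by omega] at h
      exact h
    have wrap' : ((fun i : Fin (m+1) => F (J + 1 + (i:ℕ))) (Fin.last m)).Prec
        ((fun i : Fin (m+1) => F (J + 1 + (i:ℕ))) 0) := by
      simp only [Fin.val_last, Fin.val_zero]
      rw [show J + 1 + m = J + (m+1) from by omega, show J + 1 + 0 = J + 1 from rfl]
      exact hAC
    exact IH m (by omega) (by omega) (fun i : Fin (m+1) => F (J + 1 + (i:ℕ))) (fun i => hFmem _) chain' wrap'

/-- The relation `≺` on a finite set of pairwise disjoint upward paths has no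
directed cycles: there is no chain `P₀ ≺ P₁ ≺ ⋯ ≺ Pₙ` (with `n ≥ 1`) in `S`
closing up with `Pₙ ≺ P₀`. -/
theorem prec_no_cycle (S : Set UpwardPath) (hfin : S.Finite)
    (hdisj : S.Pairwise fun P Q => Disjoint P.image Q.image) :
    ¬ ∃ (n : ℕ) (f : Fin (n + 1) → UpwardPath),
        1 ≤ n ∧ (∀ i, f i ∈ S) ∧
        (∀ i : Fin n, (f i.castSucc).Prec (f i.succ)) ∧
        (f (Fin.last n)).Prec (f 0) := by
  rintro ⟨n, f, hn, hmem, hchain, hwrap⟩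
  exact no_cycle_aux S hdisj n hn f hmem hchain hwrap
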